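/- arXiv:2412.12452 — 3 statements merged into one kernel-verified Lean document; each statement's English description precedes it below -/
import Mathlib

section
/- Let M > 0, R₀ > 0, δ > 0 and k ∈ ℝ. There is a constant C > 0, depending only on M, R₀, δ and k, such that for every integer j ≥ 1 and every x ∈ ℝ³ with x ≠ 0, |x| ≤ R₀ and |x₃| ≤ M(x₁² + x₂²), the gradient of the point-source kernel satisfies |∇_x Φ_k(x, x_j)| ≤ C/|x|². -/
noncomputable section

open Real

/-- Euclidean space `ℝ³`. -/
abbrev E3 := EuclideanSpace ℝ (Fin 3)

/-- The fundamental solution `Φ_k(x,y) = e^{ik|x−y|}/(4π|x−y|)` of the Helmholtz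
equation in `ℝ³`. -/
def Phi (k : ℝ) (x y : E3) : ℂ :=
  Complex.exp (Complex.I * (k : ℂ) * (‖x - y‖ : ℂ)) / ((4 * Real.pi * ‖x - y‖ : ℝ) : ℂ)

/-- The exterior source points `x_j = (0,0,δ/j)`. -/
def xj (δ : ℝ) (j : ℕ) : E3 := EuclideanSpace.single (2 : Fin 3) (δ / j)

lemma e3_normsq (v : E3) : ‖v‖ ^ 2 = (v 0) ^ 2 + (v 1) ^ 2 + (v 2) ^ 2 := by
  rw [EuclideanSpace.norm_eq, Real.sq_sqrt (by positivity)]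
  simp [Fin.sum_univ_three, Real.norm_eq_abs, sq_abs]

set_option maxHeartbeats 1000000

/-- Let `M > 0`, `R₀ > 0`, `δ > 0` and `k ∈ ℝ`.  There is a constant `C > 0`,
depending only on `M, R₀, δ, k`, such that for every integer `j ≥ 1` and every `x ∈ ℝ³`
with `x ≠ 0`, `|x| ≤ R₀` and `|x₃| ≤ M(x₁² + x₂²)`, the gradient of the point-source
kernel satisfies `|∇_x Φ_k(x, x_j)| ≤ C/|x|²`. -/
theorem gradient_point_source_bound (M R₀ δ k : ℝ) (hM : 0 < M) (hR₀ : 0 < R₀)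
    (hδ : 0 < δ) :
    ∃ C > 0, ∀ j : ℕ, 1 ≤ j → ∀ x : E3, x ≠ 0 → ‖x‖ ≤ R₀ →
      |x 2| ≤ M * ((x 0) ^ 2 + (x 1) ^ 2) →
      ‖fderiv ℝ (fun z => Phi k z (xj δ j)) x‖ ≤ C / ‖x‖ ^ 2 := by
  refine ⟨(1 + M * R₀) * (|k| * (R₀ + δ) + 1), by positivity, ?_⟩
  intro j hj x hx0 hxR hx2
  set y : E3 := xj δ j with hy
  have hj1 : (1 : ℝ) ≤ (j : ℝ) := by exact_mod_cast hj
  have hy0 : y 0 = 0 := by simp [hy, xj, EuclideanSpace.single_apply]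
  have hy1 : y 1 = 0 := by simp [hy, xj, EuclideanSpace.single_apply]
  have hy2 : y 2 = δ / j := by
    rw [hy]
    simp [xj, EuclideanSpace.single_apply]
  set s : ℝ := (x 0) ^ 2 + (x 1) ^ 2 with hs
  have hs_nonneg : 0 ≤ s := by positivity
  have hnsq : ‖x‖ ^ 2 = s + (x 2) ^ 2 := by rw [e3_normsq]
  have hrsq : ‖x - y‖ ^ 2 = s + (x 2 - δ / j) ^ 2 := by
    rw [e3_normsq]
    simp only [PiLp.sub_apply, hy0, hy1, hy2, sub_zero, hs]
  have hspos : 0 < s := by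
    rcases eq_or_lt_of_le hs_nonneg with h | h
    · exfalso
      apply hx0
      have hsum := (add_eq_zero_iff_of_nonneg (sq_nonneg (x 0)) (sq_nonneg (x 1))).mp h.symm
      have h0 : x 0 = 0 := by
        have := hsum.1; nlinarith
      have h1 : x 1 = 0 := by
        have := hsum.2; nlinarith
      have h2 : x 2 = 0 := by
        have habs : |x 2| ≤ 0 := by rw [← h] at hx2; linarith [hx2]
        exact abs_nonpos_iff.mp habs
      ext i
      fin_cases i <;> simpa
    · exact h
  have hs_le : s ≤ ‖x - y‖ ^ 2 := by nlinarith [sq_nonneg (x 2 - δ / j)]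
  have hrpos : 0 < ‖x - y‖ := by
    rcases (norm_nonneg (x - y)).eq_or_lt with h | h
    · exfalso; nlinarith
    · exact h
  have hxy0 : x - y ≠ 0 := by
    intro h
    rw [h, norm_zero] at hrpos
    exact lt_irrefl 0 hrpos
  have hnx : 0 < ‖x‖ := norm_pos_iff.mpr hx0
  have hr_le : ‖x - y‖ ≤ R₀ + δ := by
    have hyn : ‖y‖ ≤ δ := by
      rw [hy, xj, EuclideanSpace.norm_single, Real.norm_eq_abs,
        abs_of_nonneg (by positivity)]
      exact div_le_self hδ.le hj1
    calc ‖x - y‖ ≤ ‖x‖ + ‖y‖ := norm_sub_le _ _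
      _ ≤ R₀ + δ := add_le_add hxR hyn
  have hx2R : |x 2| ≤ R₀ := by
    nlinarith [abs_nonneg (x 2), sq_abs (x 2), norm_nonneg x]
  have hkey : ‖x‖ ^ 2 ≤ (1 + M * R₀) * ‖x - y‖ ^ 2 := by
    have h2 : (x 2) ^ 2 ≤ M * R₀ * s :=
      calc (x 2) ^ 2 = |x 2| * |x 2| := by rw [← sq_abs]; ring
        _ ≤ (M * s) * |x 2| := mul_le_mul_of_nonneg_right hx2 (abs_nonneg _)
        _ ≤ (M * s) * R₀ := mul_le_mul_of_nonneg_left hx2R (by positivity)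
        _ = M * R₀ * s := by ring
    nlinarith [mul_le_mul_of_nonneg_left hs_le (by positivity : (0:ℝ) ≤ 1 + M * R₀)]
  -- calculus part
  set r : ℝ := ‖x - y‖ with hrdef
  set h : ℝ → ℂ := fun t : ℝ => Complex.exp (Complex.I * k * t) / (4 * (Real.pi : ℂ) * t)
    with hhdef
  have hfun : (fun z : E3 => Phi k z y) = h ∘ (fun z : E3 => ‖z - y‖) := by
    funext z
    simp only [Phi, hhdef, Function.comp]
    congr 1
    push_cast
    ring
  have hcoe : HasDerivAt (fun t : ℝ => (t : ℂ)) 1 r := by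
    simpa using (hasDerivAt_id r).ofReal_comp
  have hu : HasDerivAt (fun t : ℝ => Complex.exp (Complex.I * k * t))
      (Complex.exp (Complex.I * k * r) * (Complex.I * k)) r := by
    have := (hcoe.const_mul (Complex.I * (k : ℂ))).cexp
    simpa using this
  have hv : HasDerivAt (fun t : ℝ => 4 * (Real.pi : ℂ) * t) (4 * (Real.pi : ℂ)) r := by
    simpa using hcoe.const_mul (4 * (Real.pi : ℂ))
  have hvne : 4 * (Real.pi : ℂ) * (r : ℂ) ≠ 0 := by
    refine mul_ne_zero (mul_ne_zero (by norm_num) ?_) ?_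
    · exact Complex.ofReal_ne_zero.mpr Real.pi_ne_zero
    · exact Complex.ofReal_ne_zero.mpr hrpos.ne'
  have hD : HasDerivAt h
      ((Complex.exp (Complex.I * k * r) * (Complex.I * k) * (4 * (Real.pi : ℂ) * r)
        - Complex.exp (Complex.I * k * r) * (4 * (Real.pi : ℂ))) /
        (4 * (Real.pi : ℂ) * r) ^ 2) r := hu.div hv hvne
  set D : ℂ := (Complex.exp (Complex.I * k * r) * (Complex.I * k) * (4 * (Real.pi : ℂ) * r)
        - Complex.exp (Complex.I * k * r) * (4 * (Real.pi : ℂ))) /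
        (4 * (Real.pi : ℂ) * r) ^ 2 with hDdef
  have hE : ‖Complex.exp (Complex.I * k * r)‖ = 1 := by
    rw [Complex.norm_exp]
    simp
  have hIk : ‖Complex.I * (k : ℂ)‖ = |k| := by
    rw [norm_mul, Complex.norm_I, one_mul, Complex.norm_real, Real.norm_eq_abs]
  have h4pr : ‖4 * (Real.pi : ℂ) * (r : ℂ)‖ = 4 * Real.pi * r := by
    have hc : (4 * (Real.pi : ℂ) * (r : ℂ)) = ((4 * Real.pi * r : ℝ) : ℂ) := by
      push_cast; ring
    rw [hc, Complex.norm_real, Real.norm_eq_abs, abs_of_pos (by positivity)]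
  have h4p : ‖(4 * (Real.pi : ℂ))‖ = 4 * Real.pi := by
    have hc : (4 * (Real.pi : ℂ)) = ((4 * Real.pi : ℝ) : ℂ) := by push_cast; ring
    rw [hc, Complex.norm_real, Real.norm_eq_abs, abs_of_pos (by positivity)]
  have hA : ‖Complex.exp (Complex.I * k * r) * (Complex.I * k) * (4 * (Real.pi : ℂ) * r)‖
      = |k| * (4 * Real.pi * r) := by
    rw [norm_mul, norm_mul, hE, hIk, h4pr]; ring
  have hB : ‖Complex.exp (Complex.I * k * r) * (4 * (Real.pi : ℂ))‖ = 4 * Real.pi := by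
    rw [norm_mul, hE, h4p, one_mul]
  have hnormD : ‖D‖ ≤ (|k| * (4 * Real.pi * r) + 4 * Real.pi) / (4 * Real.pi * r) ^ 2 := by
    rw [hDdef, norm_div, norm_pow, h4pr]
    gcongr
    calc ‖Complex.exp (Complex.I * k * r) * (Complex.I * k) * (4 * (Real.pi : ℂ) * r)
          - Complex.exp (Complex.I * k * r) * (4 * (Real.pi : ℂ))‖
        ≤ ‖Complex.exp (Complex.I * k * r) * (Complex.I * k) * (4 * (Real.pi : ℂ) * r)‖
          + ‖Complex.exp (Complex.I * k * r) * (4 * (Real.pi : ℂ))‖ := norm_sub_le _ _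
      _ = |k| * (4 * Real.pi * r) + 4 * Real.pi := by rw [hA, hB]
  -- differentiability of the radial function
  have hgdiff : DifferentiableAt ℝ (fun z : E3 => ‖z - y‖) x :=
    DifferentiableAt.norm ℝ (differentiableAt_id.sub_const y) (by simpa using hxy0)
  have hlip : LipschitzWith 1 (fun z : E3 => ‖z - y‖) := by
    apply LipschitzWith.of_dist_le_mul
    intro a b
    rw [Real.dist_eq, dist_eq_norm, NNReal.coe_one, one_mul]
    calc |‖a - y‖ - ‖b - y‖| ≤ ‖(a - y) - (b - y)‖ := abs_norm_sub_norm_le _ _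
      _ = ‖a - b‖ := by rw [sub_sub_sub_cancel_right]
  have hGle : ‖fderiv ℝ (fun z : E3 => ‖z - y‖) x‖ ≤ 1 := by
    simpa using norm_fderiv_le_of_lipschitz ℝ hlip
  have hFD : HasFDerivAt (fun z : E3 => Phi k z y)
      ((ContinuousLinearMap.smulRight (1 : ℝ →L[ℝ] ℝ) D).comp
        (fderiv ℝ (fun z : E3 => ‖z - y‖) x)) x := by
    rw [hfun]
    exact (hD.hasFDerivAt).comp x hgdiff.hasFDerivAt
  rw [hFD.fderiv]
  have h4rpos : 0 < 4 * Real.pi * r := mul_pos (by positivity) hrpos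
  calc ‖(ContinuousLinearMap.smulRight (1 : ℝ →L[ℝ] ℝ) D).comp
        (fderiv ℝ (fun z : E3 => ‖z - y‖) x)‖
      ≤ ‖ContinuousLinearMap.smulRight (1 : ℝ →L[ℝ] ℝ) D‖ *
        ‖fderiv ℝ (fun z : E3 => ‖z - y‖) x‖ := ContinuousLinearMap.opNorm_comp_le _ _
    _ ≤ ‖D‖ * 1 := by
        rw [ContinuousLinearMap.norm_smulRight_apply]
        have h1 : ‖(1 : ℝ →L[ℝ] ℝ)‖ = 1 := norm_one
        rw [h1, one_mul]
        exact mul_le_mul_of_nonneg_left hGle (norm_nonneg D)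
    _ = ‖D‖ := mul_one _
    _ ≤ (|k| * (4 * Real.pi * r) + 4 * Real.pi) / (4 * Real.pi * r) ^ 2 := hnormD
    _ ≤ (1 + M * R₀) * (|k| * (R₀ + δ) + 1) / ‖x‖ ^ 2 := by
        rw [div_le_div_iff₀ (pow_pos h4rpos 2) (pow_pos hnx 2)]
        have hApos : 0 ≤ |k| * (4 * Real.pi * r) + 4 * Real.pi := by
          have := mul_nonneg (abs_nonneg k) h4rpos.le
          positivity
        calc (|k| * (4 * Real.pi * r) + 4 * Real.pi) * ‖x‖ ^ 2
            ≤ (|k| * (4 * Real.pi * r) + 4 * Real.pi) * ((1 + M * R₀) * r ^ 2) :=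
              mul_le_mul_of_nonneg_left hkey hApos
          _ = (1 + M * R₀) * ((|k| * r + 1) * (4 * Real.pi)) * r ^ 2 := by ring
          _ ≤ (1 + M * R₀) * ((|k| * (R₀ + δ) + 1) * (4 * Real.pi)) * r ^ 2 := by
              gcongr
          _ = ((1 + M * R₀) * (|k| * (R₀ + δ) + 1)) * ((4 * Real.pi) * r ^ 2) := by ring
          _ ≤ ((1 + M * R₀) * (|k| * (R₀ + δ) + 1)) * (4 * Real.pi * r) ^ 2 := by
              have h7 : (0:ℝ) ≤ 4 * Real.pi - 1 := by nlinarith [Real.pi_gt_three]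
              have h6 : (4 * Real.pi) * r ^ 2 ≤ (4 * Real.pi * r) ^ 2 := by
                nlinarith [mul_nonneg (mul_nonneg h7 Real.pi_pos.le) (sq_nonneg r)]
              exact mul_le_mul_of_nonneg_left h6 (by positivity)
end
end

section
/- Let B = B_R(x₀) ⊂ ℝ³ be an open ball, k > 0, and let η₀, δ₁, δ, N₁, N′, C₁, λ be positive constants; set C′ = 1/N′. Assume C′η₀ > C₁k² and C′C₁k²/(C′η₀ − C₁k²) < λ/(k²N₁²) − 1/δ₁. Then there exists c > 0, depending only on k, η₀, δ₁, N₁, N′, C₁ and λ, such that: for every twice continuously differentiable u : ℝ³ → ℂ satisfying the trace inequality ∫_{∂B} |∂_ν u|² dμH² ≤ C₁ ∫_B |Δu|² dx and the Poincaré inequality ∫_B ‖∇u‖² dx ≥ λ ∫_B |u|² dx, for every measurable η : ∂B → ℝ with η ≥ η₀, and for all measurable n₁, n₂ : B → ℝ with δ₁ ≤ n₁ ≤ N₁ and δ ≤ n₁ − n₂ ≤ N′ on B, one has ∫_B (n₁ − n₂)^{−1} |Δu + k²n₁u|² dx + k² ∫_B ‖∇u‖² dx − k⁴ ∫_B n₁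 |u|² dx − ∫_{∂B} (k²/η) |∂_ν u|² dμH² ≥ c ∫_B |Δu|² dx. (This is the coercivity of the interior transmission form under the condition n₁ − n₂ > 0, η > δ₂ > 0, with the smallness condition 0 < C′C₁(Ω)k²/(C′ inf η − C₁(Ω)k²) < λ₁(Ω)/(k² (sup n₁)²) − 1/inf n₁.) -/
noncomputable section

open Real MeasureTheory Metric

/-- The Laplacian (sum of second partial derivatives). -/
def lap (f : E3 → ℂ) (x : E3) : ℂ :=
  ∑ i : Fin 3, fderiv ℝ (fun y => fderiv ℝ f y (EuclideanSpace.single i 1)) x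
    (EuclideanSpace.single i 1)

/-- The squared norm of the gradient: `‖∇u‖² = Σᵢ |∂ᵢu|²`. -/
def gradSq (f : E3 → ℂ) (x : E3) : ℝ :=
  ∑ i : Fin 3, ‖fderiv ℝ f x (EuclideanSpace.single i 1)‖ ^ 2

open scoped ENNReal NNReal

set_option maxHeartbeats 2000000

abbrev E2 := EuclideanSpace ℝ (Fin 2)

-- bounded sets in E2 have finite Hausdorff 2-measure
lemma hm_E2_bounded (s : Set E2) (hs : Bornology.IsBounded s) : μH[(2:ℝ)] s < ⊤ := by
  set f := WithLp.equiv 2 (Fin 2 → ℝ)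
  have hf : AntilipschitzWith ((Fintype.card (Fin 2) : NNReal) ^ ((1:ℝ≥0∞)/2).toReal) f :=
    PiLp.antilipschitzWith_ofLp 2 _
  have h1 : μH[(2:ℝ)] s ≤ _ * μH[(2:ℝ)] (f '' s) := hf.le_hausdorffMeasure_image (by norm_num) s
  have h2 : (μH[(2:ℝ)] : Measure (Fin 2 → ℝ)) = volume := by
    have := hausdorffMeasure_pi_real (ι := Fin 2)
    simpa using this
  rw [h2] at h1
  have h3 : volume (f '' s) < ⊤ := by
    have : Bornology.IsBounded (f '' s) := (PiLp.lipschitzWith_ofLp 2 _).isBounded_image hs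
    obtain ⟨r, hr⟩ := this.subset_closedBall 0
    exact lt_of_le_of_lt (measure_mono hr) (isCompact_closedBall 0 r).measure_lt_top
  calc μH[(2:ℝ)] s ≤ _ := h1
    _ < ⊤ := ENNReal.mul_lt_top (ENNReal.rpow_lt_top_of_nonneg (by norm_num) ENNReal.coe_ne_top) h3

lemma sqrt_est {R p q : ℝ} (hp2 : p^2 ≤ 2/3*R^2) (hq2 : q^2 ≤ 2/3*R^2) :
    |Real.sqrt (R^2 - p^2) - Real.sqrt (R^2 - q^2)| ≤ Real.sqrt 3 * |p - q| := by
  set s := Real.sqrt (R^2 - p^2) with hs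
  set t := Real.sqrt (R^2 - q^2) with ht
  have hs0 : 0 ≤ s := Real.sqrt_nonneg _
  have ht0 : 0 ≤ t := Real.sqrt_nonneg _
  have hs2 : s^2 = R^2 - p^2 := Real.sq_sqrt (by nlinarith)
  have ht2 : t^2 = R^2 - q^2 := Real.sq_sqrt (by nlinarith)
  have hslb : R^2 ≤ 3 * s^2 := by nlinarith
  have htlb : R^2 ≤ 3 * t^2 := by nlinarith
  have hst : R^2/3 ≤ s*t := by
    nlinarith [sq_nonneg (s*t), mul_nonneg hs0 ht0, sq_nonneg (s*t - R^2/3), sq_nonneg (s*t + R^2/3)]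
  have hkey : (s - t)^2 ≤ 3 * (p - q)^2 := by
    have hid : ((s - t)*(s + t))^2 = ((q - p)*(q + p))^2 := by
      have : s^2 - t^2 = q^2 - p^2 := by rw [hs2, ht2]; ring
      nlinarith [this]
    nlinarith [sq_nonneg (s - t), sq_nonneg (q - p), sq_nonneg (p - q), hid, sq_nonneg R]
  calc |s - t| = Real.sqrt ((s - t)^2) := (Real.sqrt_sq_eq_abs _).symm
    _ ≤ Real.sqrt (3 * (p - q)^2) := Real.sqrt_le_sqrt hkey
    _ = Real.sqrt 3 * |p - q| := by rw [Real.sqrt_mul (by norm_num), Real.sqrt_sq_eq_abs]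

lemma coord_le_norm (w : E2) (j : Fin 2) : |w j| ≤ ‖w‖ := by
  rw [EuclideanSpace.norm_eq w]
  have h1 : |w j| = Real.sqrt (‖w j‖^2) := by rw [Real.sqrt_sq_eq_abs]; simp
  rw [h1]
  apply Real.sqrt_le_sqrt
  exact Finset.single_le_sum (f := fun i => ‖w i‖^2) (fun i _ => sq_nonneg _) (Finset.mem_univ j)

lemma E3_sum_apply (f : Fin 3 → E3) (j : Fin 3) : (∑ m : Fin 3, f m) j = ∑ m : Fin 3, f m j := by
  simp [Fin.sum_univ_three]

lemma E3_decomp (v : E3) (i : Fin 3) :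
    v = v i • EuclideanSpace.single i 1
      + ∑ j : Fin 2, v (i.succAbove j) • EuclideanSpace.single (i.succAbove j) (1:ℝ) := by
  have h : v = ∑ m : Fin 3, v m • EuclideanSpace.single m (1:ℝ) := by
    ext j
    rw [E3_sum_apply]
    simp [EuclideanSpace.single_apply]
  conv_lhs => rw [h]
  rw [Fin.sum_univ_succAbove (fun m => v m • EuclideanSpace.single m (1:ℝ)) i]

def gmap (x₀ : E3) (R σ : ℝ) (i : Fin 3) (y : E2) : E3 :=
  x₀ + (σ * Real.sqrt (R^2 - ‖y‖^2)) • EuclideanSpace.single i 1 +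
    ∑ j : Fin 2, y j • EuclideanSpace.single (i.succAbove j) (1:ℝ)

lemma gmap_lipschitz (x₀ : E3) (R σ : ℝ) (i : Fin 3) (hσ : |σ| ≤ 1) :
    LipschitzOnWith 4 (gmap x₀ R σ i) {y : E2 | ‖y‖^2 ≤ 2/3*R^2} := by
  rw [lipschitzOnWith_iff_dist_le_mul]
  intro y hy z hz
  rw [dist_eq_norm, dist_eq_norm]
  have hdiff : gmap x₀ R σ i y - gmap x₀ R σ i z
      = (σ * Real.sqrt (R^2 - ‖y‖^2) - σ * Real.sqrt (R^2 - ‖z‖^2)) • EuclideanSpace.single i 1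
        + ∑ j : Fin 2, ((y - z) j) • EuclideanSpace.single (i.succAbove j) (1:ℝ) := by
    simp only [gmap, sub_smul, Finset.sum_sub_distrib, PiLp.sub_apply]
    abel
  rw [hdiff]
  have hφ : |σ * Real.sqrt (R^2 - ‖y‖^2) - σ * Real.sqrt (R^2 - ‖z‖^2)| ≤ 2 * ‖y - z‖ := by
    have h1 : |σ * Real.sqrt (R^2 - ‖y‖^2) - σ * Real.sqrt (R^2 - ‖z‖^2)|
        = |σ| * |Real.sqrt (R^2 - ‖y‖^2) - Real.sqrt (R^2 - ‖z‖^2)| := by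
      rw [← abs_mul]; ring_nf
    rw [h1]
    have h2 := sqrt_est (R := R) (p := ‖y‖) (q := ‖z‖) hy hz
    have h3 : |‖y‖ - ‖z‖| ≤ ‖y - z‖ := abs_norm_sub_norm_le y z
    have h4 : Real.sqrt 3 ≤ 2 := by
      rw [show (2:ℝ) = Real.sqrt 4 by rw [show (4:ℝ) = 2^2 by norm_num, Real.sqrt_sq]; norm_num]
      exact Real.sqrt_le_sqrt (by norm_num)
    calc |σ| * |Real.sqrt (R^2 - ‖y‖^2) - Real.sqrt (R^2 - ‖z‖^2)|
        ≤ 1 * (Real.sqrt 3 * |‖y‖ - ‖z‖|) := by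
          apply mul_le_mul hσ h2 (abs_nonneg _) (by norm_num)
      _ ≤ 2 * ‖y - z‖ := by
          rw [one_mul]
          exact mul_le_mul h4 h3 (abs_nonneg _) (by norm_num)
  have hsum : ‖∑ j : Fin 2, ((y - z) j) • EuclideanSpace.single (i.succAbove j) (1:ℝ)‖
      ≤ 2 * ‖y - z‖ := by
    calc ‖∑ j : Fin 2, ((y - z) j) • EuclideanSpace.single (i.succAbove j) (1:ℝ)‖
        ≤ ∑ j : Fin 2, ‖((y - z) j) • EuclideanSpace.single (i.succAbove j) (1:ℝ)‖ :=
          norm_sum_le _ _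
      _ = ∑ j : Fin 2, |(y - z) j| := by
          simp [norm_smul, EuclideanSpace.norm_single]
      _ ≤ ∑ j : Fin 2, ‖y - z‖ := Finset.sum_le_sum (fun j _ => coord_le_norm _ j)
      _ = 2 * ‖y - z‖ := by rw [Finset.sum_const]; simp [two_mul]
  calc ‖_ + _‖ ≤ ‖(σ * Real.sqrt (R^2 - ‖y‖^2) - σ * Real.sqrt (R^2 - ‖z‖^2)) •
          EuclideanSpace.single i (1:ℝ)‖
        + ‖∑ j : Fin 2, ((y - z) j) • EuclideanSpace.single (i.succAbove j) (1:ℝ)‖ :=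
        norm_add_le _ _
    _ ≤ 2 * ‖y - z‖ + 2 * ‖y - z‖ := by
        apply add_le_add _ hsum
        rw [norm_smul, EuclideanSpace.norm_single]
        simpa using hφ
    _ = (4:ℝ≥0) * ‖y - z‖ := by push_cast; ring

lemma sphere_cover (x₀ : E3) (R : ℝ) (hR : 0 < R) :
    sphere x₀ R ⊆ ⋃ i : Fin 3,
      (gmap x₀ R 1 i '' {y : E2 | ‖y‖^2 ≤ 2/3*R^2}
        ∪ gmap x₀ R (-1) i '' {y : E2 | ‖y‖^2 ≤ 2/3*R^2}) := by
  intro x hx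
  have hnorm : ‖x - x₀‖ = R := mem_sphere_iff_norm.mp hx
  have hsum : ∑ m : Fin 3, ((x - x₀) m)^2 = R^2 := by
    have h2 : ‖x - x₀‖^2 = ∑ m : Fin 3, ‖(x - x₀) m‖^2 := by
      rw [EuclideanSpace.norm_eq, Real.sq_sqrt (Finset.sum_nonneg fun m _ => sq_nonneg _)]
    rw [hnorm] at h2
    simp only [Real.norm_eq_abs, sq_abs] at h2
    exact h2.symm
  obtain ⟨i, hi⟩ : ∃ i : Fin 3, R^2 ≤ 3 * ((x - x₀) i)^2 := by
    by_contra hcon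
    push_neg at hcon
    have h0 := hcon 0; have h1 := hcon 1; have h2 := hcon 2
    rw [Fin.sum_univ_three] at hsum
    nlinarith
  set y : E2 := (WithLp.equiv 2 (Fin 2 → ℝ)).symm (fun j => (x - x₀) (i.succAbove j)) with hy
  have hyj : ∀ j : Fin 2, y j = (x - x₀) (i.succAbove j) := fun j => rfl
  have hynorm : ‖y‖^2 = ∑ j : Fin 2, ((x - x₀) (i.succAbove j))^2 := by
    rw [EuclideanSpace.norm_eq, Real.sq_sqrt (Finset.sum_nonneg fun m _ => sq_nonneg _)]
    congr 1; ext j; rw [hyj j]; rw [Real.norm_eq_abs, sq_abs]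
  have hsplit : ((x - x₀) i)^2 + ∑ j : Fin 2, ((x - x₀) (i.succAbove j))^2 = R^2 := by
    rw [← hsum, Fin.sum_univ_succAbove (fun m => ((x - x₀) m)^2) i]
  have hyD : y ∈ {y : E2 | ‖y‖^2 ≤ 2/3*R^2} := by
    simp only [Set.mem_setOf_eq, hynorm]
    nlinarith
  have hsq : R^2 - ‖y‖^2 = ((x - x₀) i)^2 := by rw [hynorm]; linarith
  set σ : ℝ := if 0 ≤ (x - x₀) i then 1 else -1 with hσ
  have hkey : σ * Real.sqrt (R^2 - ‖y‖^2) = (x - x₀) i := by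
    rw [hsq, Real.sqrt_sq_eq_abs]
    by_cases hc : 0 ≤ (x - x₀) i
    · rw [hσ, if_pos hc, one_mul, abs_of_nonneg hc]
    · rw [hσ, if_neg hc, abs_of_neg (not_le.mp hc)]; ring
  have hgx : gmap x₀ R σ i y = x := by
    rw [gmap, hkey]
    have := E3_decomp (x - x₀) i
    calc x₀ + (x - x₀) i • EuclideanSpace.single i 1
          + ∑ j : Fin 2, y j • EuclideanSpace.single (i.succAbove j) (1:ℝ)
        = x₀ + ((x - x₀) i • EuclideanSpace.single i 1
          + ∑ j : Fin 2, (x - x₀) (i.succAbove j) • EuclideanSpace.single (i.succAbove j) (1:ℝ)) := by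
          rw [add_assoc]
          rfl
      _ = x₀ + (x - x₀) := by rw [← this]
      _ = x := by abel
  refine Set.mem_iUnion.mpr ⟨i, ?_⟩
  by_cases hc : 0 ≤ (x - x₀) i
  · left; exact ⟨y, hyD, by rw [← hgx, hσ, if_pos hc]⟩
  · right; exact ⟨y, hyD, by rw [← hgx, hσ, if_neg hc]⟩

lemma sphere_hm_lt_top (x₀ : E3) (R : ℝ) (hR : 0 < R) :
    μH[(2:ℝ)] (sphere x₀ R) < ⊤ := by
  set D := {y : E2 | ‖y‖^2 ≤ 2/3*R^2} with hD
  have hDb : Bornology.IsBounded D := by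
    apply Bornology.IsBounded.subset (Metric.isBounded_closedBall (x := (0:E2)) (r := R))
    intro y hy
    simp only [Metric.mem_closedBall, dist_zero_right]
    have : ‖y‖^2 ≤ 2/3*R^2 := hy
    nlinarith [norm_nonneg y]
  have himg : ∀ (σ : ℝ), |σ| ≤ 1 → ∀ i : Fin 3, μH[(2:ℝ)] (gmap x₀ R σ i '' D) < ⊤ := by
    intro σ hσ i
    calc μH[(2:ℝ)] (gmap x₀ R σ i '' D) ≤ ((4:ℝ≥0):ℝ≥0∞)^(2:ℝ) * μH[(2:ℝ)] D :=
          (gmap_lipschitz x₀ R σ i hσ).hausdorffMeasure_image_le (by norm_num)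
      _ < ⊤ := ENNReal.mul_lt_top (ENNReal.rpow_lt_top_of_nonneg (by norm_num) ENNReal.coe_ne_top)
          (hm_E2_bounded D hDb)
  calc μH[(2:ℝ)] (sphere x₀ R)
      ≤ μH[(2:ℝ)] (⋃ i : Fin 3, (gmap x₀ R 1 i '' D ∪ gmap x₀ R (-1) i '' D)) :=
        measure_mono (sphere_cover x₀ R hR)
    _ ≤ ∑ i : Fin 3, μH[(2:ℝ)] (gmap x₀ R 1 i '' D ∪ gmap x₀ R (-1) i '' D) :=
        measure_iUnion_fintype_le _ _
    _ < ⊤ := by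
        apply ENNReal.sum_lt_top.mpr
        intro i _
        calc μH[(2:ℝ)] (gmap x₀ R 1 i '' D ∪ gmap x₀ R (-1) i '' D)
            ≤ μH[(2:ℝ)] (gmap x₀ R 1 i '' D) + μH[(2:ℝ)] (gmap x₀ R (-1) i '' D) :=
              measure_union_le _ _
          _ < ⊤ := ENNReal.add_lt_top.mpr
              ⟨himg 1 (by norm_num) i, himg (-1) (by norm_num) i⟩

lemma key_sq {ε t x y z : ℝ} (hz : 0 ≤ z) (hε0 : 0 < ε) (hε1 : ε < 1)
    (ht : 1 - ε = t * ε) (hxyz : x ≤ y + z) (hx : 0 ≤ x) :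
    (1 - ε) * x^2 ≤ y^2 + t * z^2 := by
  have h2 : x^2 ≤ (y + z)^2 := by nlinarith
  have h3 : ε * ((1-ε) * (y+z)^2) ≤ ε * y^2 + (1-ε) * z^2 := by
    nlinarith [sq_nonneg (ε*y - (1-ε)*z)]
  have hpos : 0 ≤ ε*(1-ε) := by nlinarith
  have hmul := mul_le_mul_of_nonneg_left h2 hpos
  have h5 : ε*(t*z^2) = (1-ε)*z^2 := by
    calc ε*(t*z^2) = (t*ε)*z^2 := by ring
      _ = (1-ε)*z^2 := by rw [← ht]
  have h4 : 0 ≤ ε * (y^2 + t*z^2 - (1-ε)*x^2) := by nlinarith [h3, hmul, h5]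
  by_contra hcon
  push_neg at hcon
  have : ε * (y^2 + t*z^2 - (1-ε)*x^2) < 0 := mul_neg_of_pos_of_neg hε0 (by linarith)
  linarith

lemma pointwise_key {C' t ε k lam δ₁ N₁ : ℝ} (L w : ℂ) {n d : ℝ}
    (hC' : 0 < C') (hε0 : 0 < ε) (hε1 : ε < 1) (ht : 1 - ε = t * ε) (ht0 : 0 ≤ t)
    (hk : 0 < k) (hδ₁ : 0 < δ₁)
    (hn1 : δ₁ ≤ n) (hn2 : n ≤ N₁) (hd1 : 0 < d) (hd2 : d ≤ 1/C')
    (hlam : (C'*t + 1/δ₁) * (k^2 * N₁^2) ≤ lam) :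
    C'*(1-ε)*‖L‖^2 - lam*k^2*‖w‖^2
      ≤ d⁻¹ * ‖L + (k:ℂ)^2*(n:ℂ)*w‖^2 - k^4*n*‖w‖^2 := by
  have hn0 : 0 < n := lt_of_lt_of_le hδ₁ hn1
  have hb : ‖(k:ℂ)^2*(n:ℂ)*w‖ = k^2*n*‖w‖ := by
    rw [norm_mul, norm_mul, norm_pow, Complex.norm_real, Real.norm_eq_abs,
      Complex.norm_real, Real.norm_eq_abs, abs_of_pos hk, abs_of_pos hn0]
  have htri : ‖L‖ ≤ ‖L + (k:ℂ)^2*(n:ℂ)*w‖ + ‖(k:ℂ)^2*(n:ℂ)*w‖ := by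
    have h := norm_sub_le (L + (k:ℂ)^2*(n:ℂ)*w) ((k:ℂ)^2*(n:ℂ)*w)
    rwa [add_sub_cancel_right] at h
  have hkey : (1-ε)*‖L‖^2 ≤ ‖L + (k:ℂ)^2*(n:ℂ)*w‖^2 + t*(k^2*n*‖w‖)^2 := by
    have := key_sq (z := ‖(k:ℂ)^2*(n:ℂ)*w‖) (norm_nonneg _) hε0 hε1 ht htri (norm_nonneg L)
    rwa [hb] at this
  have hCd : C' ≤ d⁻¹ := by
    have h1 : d ≤ C'⁻¹ := by rwa [one_div] at hd2
    calc C' = (C'⁻¹)⁻¹ := (inv_inv C').symm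
      _ ≤ d⁻¹ := by gcongr
  have hmono : C' * ‖L + (k:ℂ)^2*(n:ℂ)*w‖^2 ≤ d⁻¹ * ‖L + (k:ℂ)^2*(n:ℂ)*w‖^2 :=
    mul_le_mul_of_nonneg_right hCd (sq_nonneg _)
  have hnN : n * δ₁ ≤ N₁^2 := by nlinarith
  have hcoef : k^4*(C'*t*n^2 + n) ≤ lam*k^2 := by
    have h1 : C'*t*n^2 + n ≤ (C'*t + 1/δ₁)*N₁^2 := by
      have hn2' : n^2 ≤ N₁^2 := by nlinarith
      have h6 : n ≤ 1/δ₁*N₁^2 := by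
        rw [div_mul_eq_mul_div, le_div_iff₀ hδ₁, one_mul]; linarith
      nlinarith [mul_le_mul_of_nonneg_left hn2' (mul_nonneg hC'.le ht0)]
    nlinarith [mul_le_mul_of_nonneg_left h1 (pow_nonneg hk.le 4),
      mul_le_mul_of_nonneg_left hlam (pow_nonneg hk.le 2)]
  nlinarith [hmono, mul_le_mul_of_nonneg_left hkey hC'.le,
    mul_le_mul_of_nonneg_right hcoef (sq_nonneg ‖w‖)]

lemma cont_fderiv_apply (u : E3 → ℂ) (hu : ContDiff ℝ 2 u) (v : E3) :
    ContDiff ℝ 1 (fun y => fderiv ℝ u y v) := by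
  have h1 : ContDiff ℝ 1 (fderiv ℝ u) := hu.fderiv_right (m := 1) (by norm_num)
  exact (ContinuousLinearMap.apply ℝ ℂ v).contDiff.comp h1

lemma cont_lap (u : E3 → ℂ) (hu : ContDiff ℝ 2 u) : Continuous (lap u) := by
  apply continuous_finset_sum
  intro i _
  have h1 : ContDiff ℝ 1 (fun y => fderiv ℝ u y (EuclideanSpace.single i 1)) :=
    cont_fderiv_apply u hu _
  have h2 : Continuous (fderiv ℝ (fun y => fderiv ℝ u y (EuclideanSpace.single i 1))) :=
    (h1.fderiv_right (m := 0) (by norm_num)).continuous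
  exact (ContinuousLinearMap.apply ℝ ℂ (EuclideanSpace.single i 1)).continuous.comp h2

lemma cont_normal_deriv (u : E3 → ℂ) (hu : ContDiff ℝ 2 u) (x₀ : E3) (R : ℝ) :
    Continuous (fun x => ‖fderiv ℝ u x (R⁻¹ • (x - x₀))‖ ^ 2) := by
  have h1 : Continuous (fderiv ℝ u) := (hu.fderiv_right (m := 1) (by norm_num)).continuous
  have h2 : Continuous (fun x : E3 => R⁻¹ • (x - x₀)) := by fun_prop
  exact ((h1.clm_apply h2).norm).pow 2

-- continuous real functions are integrable on balls
lemma cont_int_ball (f : E3 → ℝ) (hf : Continuous f) (x₀ : E3) (R : ℝ) :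
    IntegrableOn f (ball x₀ R) volume :=
  (hf.continuousOn.integrableOn_compact (isCompact_closedBall x₀ R)).mono_set
    ball_subset_closedBall

-- bounded measurable-ish functions integrable on finite measure sets
lemma bdd_int (μ : Measure E3) (s : Set E3) (hs : MeasurableSet s) (hμ : μ s < ⊤)
    (f : E3 → ℝ) (hf : AEStronglyMeasurable f (μ.restrict s)) (C : ℝ)
    (hC : ∀ x ∈ s, ‖f x‖ ≤ C) : IntegrableOn f s μ := by
  apply Integrable.mono' (g := fun _ => C) (integrableOn_const hμ.ne) hf
  exact (ae_restrict_iff' hs).mpr (Filter.Eventually.of_forall hC)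

lemma aux_div_lt {C' a M : ℝ} (hC' : 0 < C') (h : C' * a < M) : a < M / C' := by
  rw [lt_div_iff₀ hC']; nlinarith

lemma aux_mul_lt {a t A X : ℝ} (hA : 0 < A) (h : a * A = X) (hat : a < t) : X < t * A := by
  nlinarith

lemma aux_mul_le {x y z : ℝ} (h1 : x < y) (h2 : 0 < z) : x * z ≤ y * z := by nlinarith

lemma iI_bound (L w : ℂ) {k N₁ δ n₁ n₂ : ℝ} (hk : 0 < k) (hn0 : 0 < n₁) (hn : n₁ ≤ N₁)
    (hδ : 0 < δ) (hd : δ ≤ n₁ - n₂) :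
    ‖(n₁ - n₂)⁻¹ * ‖L + (k:ℂ)^2*(n₁:ℂ)*w‖^2‖
      ≤ (δ⁻¹ * 2) * ‖L‖^2 + (δ⁻¹ * 2 * (k^2*N₁)^2) * ‖w‖^2 := by
  have hdpos : 0 < n₁ - n₂ := lt_of_lt_of_le hδ hd
  have hinv : (n₁ - n₂)⁻¹ ≤ δ⁻¹ := inv_anti₀ hδ hd
  have hinv0 : 0 ≤ (n₁ - n₂)⁻¹ := inv_nonneg.mpr hdpos.le
  have hbn : ‖(k:ℂ)^2*(n₁:ℂ)*w‖ = k^2*n₁*‖w‖ := by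
    rw [norm_mul, norm_mul, norm_pow, Complex.norm_real, Real.norm_eq_abs,
      Complex.norm_real, Real.norm_eq_abs, abs_of_pos hk, abs_of_pos hn0]
  have hb2 : k^2*n₁*‖w‖ ≤ k^2*N₁*‖w‖ := by
    apply mul_le_mul_of_nonneg_right _ (norm_nonneg w)
    exact mul_le_mul_of_nonneg_left hn (sq_nonneg k)
  have h7 : ‖L + (k:ℂ)^2*(n₁:ℂ)*w‖ ≤ ‖L‖ + k^2*N₁*‖w‖ := by
    calc ‖L + (k:ℂ)^2*(n₁:ℂ)*w‖ ≤ ‖L‖ + ‖(k:ℂ)^2*(n₁:ℂ)*w‖ := norm_add_le _ _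
      _ ≤ ‖L‖ + k^2*N₁*‖w‖ := by rw [hbn]; linarith
  have h8 : ‖L + (k:ℂ)^2*(n₁:ℂ)*w‖^2 ≤ (‖L‖ + k^2*N₁*‖w‖)^2 :=
    pow_le_pow_left₀ (norm_nonneg _) h7 2
  have hsq : ‖L + (k:ℂ)^2*(n₁:ℂ)*w‖^2 ≤ 2*‖L‖^2 + 2*(k^2*N₁)^2*‖w‖^2 := by
    nlinarith [h8, sq_nonneg (‖L‖ - k^2*N₁*‖w‖)]
  rw [Real.norm_eq_abs, abs_mul, abs_of_nonneg hinv0, abs_of_nonneg (sq_nonneg _)]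
  calc (n₁ - n₂)⁻¹ * ‖L + (k:ℂ)^2*(n₁:ℂ)*w‖^2
      ≤ δ⁻¹ * (2*‖L‖^2 + 2*(k^2*N₁)^2*‖w‖^2) := by
        apply mul_le_mul hinv hsq (sq_nonneg _) (inv_nonneg.mpr hδ.le)
    _ = (δ⁻¹ * 2) * ‖L‖^2 + (δ⁻¹ * 2 * (k^2*N₁)^2) * ‖w‖^2 := by ring


/-- coercivity of the interior transmission form under `n₁ − n₂ > 0`,
`η ≥ η₀ > 0`, with the smallness condition
`0 < C′C₁k²/(C′η₀ − C₁k²) < λ/(k²N₁²) − 1/δ₁`, `C′ = 1/N′`.  On a ball `B = B_R(x₀)`,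
for every `C²` function `u` satisfying the trace inequality
`∫_{∂B} |∂_ν u|² dμH² ≤ C₁ ∫_B |Δu|²` and the Poincaré inequality
`∫_B ‖∇u‖² ≥ λ ∫_B |u|²`, every measurable `η ≥ η₀` on `∂B`, and all measurable
`n₁, n₂` with `δ₁ ≤ n₁ ≤ N₁`, `δ ≤ n₁ − n₂ ≤ N′` on `B`, one has
`∫_B (n₁−n₂)⁻¹|Δu + k²n₁u|² + k²∫_B ‖∇u‖² − k⁴∫_B n₁|u|² − ∫_{∂B} (k²/η)|∂_ν u|² dμH²
  ≥ c ∫_B |Δu|²` with `c > 0` depending only on `k, η₀, δ₁, N₁, N′, C₁, λ`. -/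
theorem interior_transmission_coercive_eta_positive (x₀ : E3)
    (R k η₀ δ₁ δ N₁ N' C₁ lam : ℝ) (hR : 0 < R) (hk : 0 < k) (hη₀ : 0 < η₀)
    (hδ₁ : 0 < δ₁) (hδ : 0 < δ) (hN₁ : 0 < N₁) (hN' : 0 < N') (hC₁ : 0 < C₁)
    (hlam : 0 < lam)
    (hgap : (1 / N') * η₀ > C₁ * k ^ 2)
    (hsmall : (1 / N') * C₁ * k ^ 2 / ((1 / N') * η₀ - C₁ * k ^ 2)
      < lam / (k ^ 2 * N₁ ^ 2) - 1 / δ₁) :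
    ∃ c > 0, ∀ u : E3 → ℂ, ContDiff ℝ 2 u →
      ((∫ x in sphere x₀ R, ‖fderiv ℝ u x (R⁻¹ • (x - x₀))‖ ^ 2 ∂(μH[(2 : ℝ)]))
        ≤ C₁ * ∫ x in ball x₀ R, ‖lap u x‖ ^ 2) →
      (lam * ∫ x in ball x₀ R, ‖u x‖ ^ 2 ≤ ∫ x in ball x₀ R, gradSq u x) →
      ∀ η : E3 → ℝ, Measurable η → (∀ x ∈ sphere x₀ R, η₀ ≤ η x) →
      ∀ n₁ n₂ : E3 → ℝ, Measurable n₁ → Measurable n₂ →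
        (∀ x ∈ ball x₀ R, δ₁ ≤ n₁ x ∧ n₁ x ≤ N₁) →
        (∀ x ∈ ball x₀ R, δ ≤ n₁ x - n₂ x ∧ n₁ x - n₂ x ≤ N') →
        c * ∫ x in ball x₀ R, ‖lap u x‖ ^ 2 ≤
          (∫ x in ball x₀ R, (n₁ x - n₂ x)⁻¹
              * ‖lap u x + (k : ℂ) ^ 2 * (n₁ x : ℂ) * u x‖ ^ 2)
            + k ^ 2 * (∫ x in ball x₀ R, gradSq u x)
            - k ^ 4 * (∫ x in ball x₀ R, n₁ x * ‖u x‖ ^ 2)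
            - (∫ x in sphere x₀ R,
                (k ^ 2 / η x) * ‖fderiv ℝ u x (R⁻¹ • (x - x₀))‖ ^ 2 ∂(μH[(2 : ℝ)])) := by
  -- set up the constants
  set C' : ℝ := 1 / N' with hC'def
  have hC' : 0 < C' := by positivity
  set A : ℝ := C' * η₀ - C₁ * k ^ 2 with hAdef
  have hA : 0 < A := by simp only [hAdef]; linarith [hgap]
  set a : ℝ := C₁ * k ^ 2 / A with hadef
  have ha : 0 < a := by positivity
  set M : ℝ := lam / (k ^ 2 * N₁ ^ 2) - 1 / δ₁ with hMdef
  have hCaM : C' * a < M := by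
    have : C' * C₁ * k ^ 2 / A = C' * a := by rw [hadef]; ring
    rw [← this]
    exact hsmall
  have hM : 0 < M := lt_trans (by positivity) hCaM
  set t : ℝ := (a + M / C') / 2 with htdef
  have haM : a < M / C' := aux_div_lt hC' hCaM
  have hat : a < t := by rw [htdef]; linarith
  have ht0 : 0 < t := lt_trans ha hat
  have htM : C' * t < M := by
    have h1 : t < M / C' := by rw [htdef]; linarith
    have h2 := mul_lt_mul_of_pos_right h1 hC'
    rw [div_mul_cancel₀ _ (ne_of_gt hC')] at h2
    linarith
  set ε : ℝ := 1 / (1 + t) with hεdef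
  have h1t : 0 < 1 + t := by linarith
  have hε0 : 0 < ε := by positivity
  have hε1 : ε < 1 := by rw [hεdef, div_lt_one h1t]; linarith
  have hεt : 1 - ε = t * ε := by
    rw [hεdef]
    field_simp
    ring
  set c : ℝ := C' * (1 - ε) - C₁ * k ^ 2 / η₀ with hcdef
  have hc : 0 < c := by
    rw [hcdef, sub_pos, div_lt_iff₀ hη₀]
    have h2 : C₁ * k ^ 2 < t * A :=
      aux_mul_lt hA (div_mul_cancel₀ _ (ne_of_gt hA)) hat
    have h3 : C₁ * k ^ 2 * (1 + t) < C' * t * η₀ := by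
      rw [hAdef] at h2; nlinarith [h2, mul_pos (mul_pos hC₁ (pow_pos hk 2)) ht0]
    have hεeq : ε * (1 + t) = 1 := by rw [hεdef]; field_simp
    calc C₁ * k ^ 2 = ε * (C₁ * k ^ 2 * (1 + t)) := by
          rw [show ε * (C₁ * k ^ 2 * (1 + t)) = (C₁ * k^2) * (ε * (1+t)) by ring, hεeq]; ring
      _ < ε * (C' * t * η₀) := by
          exact mul_lt_mul_of_pos_left h3 hε0
      _ = C' * (1 - ε) * η₀ := by rw [hεt]; ring
  have hlamcoef : (C' * t + 1 / δ₁) * (k ^ 2 * N₁ ^ 2) ≤ lam := by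
    have h1 : C' * t + 1 / δ₁ < lam / (k ^ 2 * N₁ ^ 2) := by
      rw [hMdef] at htM; linarith
    have h2 : 0 < k ^ 2 * N₁ ^ 2 := by positivity
    calc (C' * t + 1 / δ₁) * (k ^ 2 * N₁ ^ 2)
        ≤ lam / (k ^ 2 * N₁ ^ 2) * (k ^ 2 * N₁ ^ 2) := aux_mul_le h1 h2
      _ = lam := div_mul_cancel₀ _ (ne_of_gt h2)
  refine ⟨c, hc, ?_⟩
  intro u hu htrace hpoincare η hηm hη n₁ n₂ hn₁m hn₂m hn₁ hnd
  -- continuity facts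
  have hLc : Continuous (lap u) := cont_lap u hu
  have hgTc : Continuous (fun x => ‖fderiv ℝ u x (R⁻¹ • (x - x₀))‖ ^ 2) :=
    cont_normal_deriv u hu x₀ R
  have huc : Continuous u := hu.continuous
  -- ball integrability
  have iL : IntegrableOn (fun x => ‖lap u x‖ ^ 2) (ball x₀ R) volume :=
    cont_int_ball _ ((hLc.norm).pow 2) x₀ R
  have iu : IntegrableOn (fun x => ‖u x‖ ^ 2) (ball x₀ R) volume :=
    cont_int_ball _ ((huc.norm).pow 2) x₀ R
  have iP : IntegrableOn (fun x => n₁ x * ‖u x‖ ^ 2) (ball x₀ R) volume := by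
    refine Integrable.mono' (iu.const_mul N₁) ?_ ?_
    · exact ((hn₁m.mul ((huc.norm.pow 2).measurable)).aestronglyMeasurable)
    · rw [ae_restrict_iff' measurableSet_ball]
      apply Filter.Eventually.of_forall
      intro x hx
      have h1 := (hn₁ x hx).1
      have h2 := (hn₁ x hx).2
      have : |n₁ x| = n₁ x := abs_of_pos (lt_of_lt_of_le hδ₁ h1)
      rw [Real.norm_eq_abs, abs_mul, this, abs_of_nonneg (sq_nonneg _)]
      exact mul_le_mul_of_nonneg_right h2 (sq_nonneg _)
  have iI : IntegrableOn (fun x => (n₁ x - n₂ x)⁻¹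
      * ‖lap u x + (k : ℂ) ^ 2 * (n₁ x : ℂ) * u x‖ ^ 2) (ball x₀ R) volume := by
    have ig1 : IntegrableOn (fun x => (δ⁻¹ * 2) * ‖lap u x‖ ^ 2) (ball x₀ R) volume :=
      iL.const_mul _
    have ig2 : IntegrableOn (fun x => (δ⁻¹ * 2 * (k ^ 2 * N₁) ^ 2) * ‖u x‖ ^ 2)
        (ball x₀ R) volume := iu.const_mul _
    refine Integrable.mono' (ig1.add ig2) ?_ ?_
    · apply Measurable.aestronglyMeasurable
      apply ((hn₁m.sub hn₂m).inv).mul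
      apply Measurable.pow_const
      apply Measurable.norm
      exact hLc.measurable.add
        ((measurable_const.mul (Complex.measurable_ofReal.comp hn₁m)).mul huc.measurable)
    · rw [ae_restrict_iff' measurableSet_ball]
      apply Filter.Eventually.of_forall
      intro x hx
      exact iI_bound (lap u x) (u x) hk (lt_of_lt_of_le hδ₁ (hn₁ x hx).1) (hn₁ x hx).2
        hδ (hnd x hx).1
  -- step 1 : ball integral inequality
  have step1 : C' * (1 - ε) * (∫ x in ball x₀ R, ‖lap u x‖ ^ 2)
      - lam * k ^ 2 * (∫ x in ball x₀ R, ‖u x‖ ^ 2)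
      ≤ (∫ x in ball x₀ R, (n₁ x - n₂ x)⁻¹
          * ‖lap u x + (k : ℂ) ^ 2 * (n₁ x : ℂ) * u x‖ ^ 2)
        - k ^ 4 * (∫ x in ball x₀ R, n₁ x * ‖u x‖ ^ 2) := by
    have hint : (∫ x in ball x₀ R, (C' * (1 - ε) * ‖lap u x‖ ^ 2 - lam * k ^ 2 * ‖u x‖ ^ 2))
        ≤ ∫ x in ball x₀ R, ((n₁ x - n₂ x)⁻¹
            * ‖lap u x + (k : ℂ) ^ 2 * (n₁ x : ℂ) * u x‖ ^ 2 - k ^ 4 * (n₁ x * ‖u x‖ ^ 2)) := by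
      apply setIntegral_mono_on
      · exact (iL.const_mul _).sub (iu.const_mul _)
      · exact iI.sub (iP.const_mul _)
      · exact measurableSet_ball
      · intro x hx
        have h := pointwise_key (lap u x) (u x) hC' hε0 hε1 hεt ht0.le hk hδ₁
          (hn₁ x hx).1 (hn₁ x hx).2 (lt_of_lt_of_le hδ (hnd x hx).1)
          (by rw [hC'def, one_div_one_div]; exact (hnd x hx).2) hlamcoef
        calc C' * (1 - ε) * ‖lap u x‖ ^ 2 - lam * k ^ 2 * ‖u x‖ ^ 2
            ≤ (n₁ x - n₂ x)⁻¹ * ‖lap u x + (k : ℂ) ^ 2 * (n₁ x : ℂ) * u x‖ ^ 2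
              - k ^ 4 * n₁ x * ‖u x‖ ^ 2 := h
          _ = (n₁ x - n₂ x)⁻¹ * ‖lap u x + (k : ℂ) ^ 2 * (n₁ x : ℂ) * u x‖ ^ 2
              - k ^ 4 * (n₁ x * ‖u x‖ ^ 2) := by ring
    rw [integral_sub (iL.const_mul _) (iu.const_mul _), integral_sub iI (iP.const_mul _),
      integral_const_mul, integral_const_mul, integral_const_mul] at hint
    exact hint
  -- step 2 : Poincaré
  have step2 : k ^ 2 * (lam * ∫ x in ball x₀ R, ‖u x‖ ^ 2)
      ≤ k ^ 2 * (∫ x in ball x₀ R, gradSq u x) :=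
    mul_le_mul_of_nonneg_left hpoincare (sq_nonneg k)
  -- step 3 : sphere term
  have hμS : μH[(2:ℝ)] (sphere x₀ R) < ⊤ := sphere_hm_lt_top x₀ R hR
  have hSm : MeasurableSet (sphere x₀ R) := (isClosed_sphere).measurableSet
  have iT : IntegrableOn (fun x => ‖fderiv ℝ u x (R⁻¹ • (x - x₀))‖ ^ 2)
      (sphere x₀ R) (μH[(2:ℝ)]) := by
    obtain ⟨Cb, hCb⟩ := (isCompact_sphere x₀ R).exists_bound_of_continuousOn
      hgTc.continuousOn
    exact bdd_int _ _ hSm hμS _ hgTc.aestronglyMeasurable Cb hCb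
  have iS : IntegrableOn (fun x => (k ^ 2 / η x) * ‖fderiv ℝ u x (R⁻¹ • (x - x₀))‖ ^ 2)
      (sphere x₀ R) (μH[(2:ℝ)]) := by
    refine Integrable.mono' (iT.const_mul (k ^ 2 / η₀)) ?_ ?_
    · exact ((measurable_const.div hηm).mul hgTc.measurable).aestronglyMeasurable
    · rw [ae_restrict_iff' hSm]
      apply Filter.Eventually.of_forall
      intro x hx
      have hηx := hη x hx
      have hηpos : 0 < η x := lt_of_lt_of_le hη₀ hηx
      have h1 : k ^ 2 / η x ≤ k ^ 2 / η₀ := by gcongr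
      have h2 : 0 ≤ k ^ 2 / η x := div_nonneg (sq_nonneg k) hηpos.le
      rw [Real.norm_eq_abs, abs_mul, abs_of_nonneg h2, abs_of_nonneg (sq_nonneg _)]
      exact mul_le_mul_of_nonneg_right h1 (sq_nonneg _)
  have step3 : (∫ x in sphere x₀ R,
        (k ^ 2 / η x) * ‖fderiv ℝ u x (R⁻¹ • (x - x₀))‖ ^ 2 ∂(μH[(2:ℝ)]))
      ≤ k ^ 2 / η₀ * (C₁ * ∫ x in ball x₀ R, ‖lap u x‖ ^ 2) := by
    have h1 : (∫ x in sphere x₀ R,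
          (k ^ 2 / η x) * ‖fderiv ℝ u x (R⁻¹ • (x - x₀))‖ ^ 2 ∂(μH[(2:ℝ)]))
        ≤ ∫ x in sphere x₀ R,
          (k ^ 2 / η₀) * ‖fderiv ℝ u x (R⁻¹ • (x - x₀))‖ ^ 2 ∂(μH[(2:ℝ)]) := by
      apply integral_mono_ae iS (iT.const_mul _)
      rw [Filter.EventuallyLE, ae_restrict_iff' hSm]
      apply Filter.Eventually.of_forall
      intro x hx
      have hηx := hη x hx
      have hηpos : 0 < η x := lt_of_lt_of_le hη₀ hηx
      have h1 : k ^ 2 / η x ≤ k ^ 2 / η₀ := by gcongr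
      exact mul_le_mul_of_nonneg_right h1 (sq_nonneg _)
    rw [integral_const_mul] at h1
    calc (∫ x in sphere x₀ R,
          (k ^ 2 / η x) * ‖fderiv ℝ u x (R⁻¹ • (x - x₀))‖ ^ 2 ∂(μH[(2:ℝ)]))
        ≤ k ^ 2 / η₀ * ∫ x in sphere x₀ R,
            ‖fderiv ℝ u x (R⁻¹ • (x - x₀))‖ ^ 2 ∂(μH[(2:ℝ)]) := h1
      _ ≤ k ^ 2 / η₀ * (C₁ * ∫ x in ball x₀ R, ‖lap u x‖ ^ 2) := by
          apply mul_le_mul_of_nonneg_left htrace (by positivity)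
  -- assemble
  have hc_expand : c * (∫ x in ball x₀ R, ‖lap u x‖ ^ 2)
      = C' * (1 - ε) * (∫ x in ball x₀ R, ‖lap u x‖ ^ 2)
        - C₁ * k ^ 2 / η₀ * (∫ x in ball x₀ R, ‖lap u x‖ ^ 2) := by
    rw [hcdef]; ring
  have hring : k ^ 2 / η₀ * (C₁ * ∫ x in ball x₀ R, ‖lap u x‖ ^ 2)
      = C₁ * k ^ 2 / η₀ * (∫ x in ball x₀ R, ‖lap u x‖ ^ 2) := by ring
  have hring2 : k ^ 2 * (lam * ∫ x in ball x₀ R, ‖u x‖ ^ 2)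
      = lam * k ^ 2 * (∫ x in ball x₀ R, ‖u x‖ ^ 2) := by ring
  linarith [step1, step2, step3]
end
end

section
/- Let k ∈ ℝ, δ > 0 and r > 0, and for each integer j ≥ 1 set x_j = (0,0,δ/j) ∈ ℝ³. Then there exist C > 0 and an integer J ≥ 1, depending only on k, δ and r, such that for all j ≥ J: ∫_{B_r(0) ∩ {x₃ < 0}} |∂_{x₃} Φ_k(x, x_j)|² dx ≥ C·j. In particular the L²-norms over the interior half-ball of the hypersingular incident fields ∇_xΦ_k(x, x_j)·ν(x₀), with ν(x₀) = e₃, grow at least like √j as the source points x_j approach the boundary point x₀ = 0. -/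
noncomputable section

open Real MeasureTheory Metric

lemma hasFDerivAt_norm_sub (y x : E3) (h : x ≠ y) :
    HasFDerivAt (fun z : E3 => ‖z - y‖)
      ((2 * ‖x - y‖)⁻¹ • ((fderivInnerCLM ℝ (x - y, x - y)).comp
        ((ContinuousLinearMap.id ℝ E3).prod (ContinuousLinearMap.id ℝ E3)))) x := by
  have hsub : HasFDerivAt (fun z : E3 => z - y) (ContinuousLinearMap.id ℝ E3) x :=
    (hasFDerivAt_id x).sub_const y
  have hq : HasFDerivAt (fun z : E3 => (inner ℝ (z - y) (z - y) : ℝ))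
      ((fderivInnerCLM ℝ (x - y, x - y)).comp
        ((ContinuousLinearMap.id ℝ E3).prod (ContinuousLinearMap.id ℝ E3))) x :=
    hsub.inner ℝ hsub
  have hxy : x - y ≠ 0 := sub_ne_zero.mpr h
  have hne : (inner ℝ (x - y) (x - y) : ℝ) ≠ 0 := by
    rw [real_inner_self_eq_norm_sq]
    simpa using norm_ne_zero_iff.mpr hxy
  have hsqrt : HasDerivAt Real.sqrt (1 / (2 * Real.sqrt (inner ℝ (x - y) (x - y) : ℝ)))
      ((fun z : E3 => (inner ℝ (z - y) (z - y) : ℝ)) x) := Real.hasDerivAt_sqrt hne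
  have hcomp := hsqrt.comp_hasFDerivAt x hq
  have heq : (fun z : E3 => ‖z - y‖) = Real.sqrt ∘ (fun z : E3 => (inner ℝ (z - y) (z - y) : ℝ)) := by
    funext z
    show ‖z - y‖ = Real.sqrt (inner ℝ (z - y) (z - y) : ℝ)
    rw [real_inner_self_eq_norm_sq, Real.sqrt_sq (norm_nonneg _)]
  rw [heq]
  refine hcomp.congr_fderiv ?_
  rw [real_inner_self_eq_norm_sq, Real.sqrt_sq (norm_nonneg _), one_div]

def gfun (k : ℝ) (t : ℝ) : ℂ :=
  Complex.exp (Complex.I * (k : ℂ) * (t : ℂ)) / ((4 * Real.pi * t : ℝ) : ℂ)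

lemma hasDerivAt_gfun (k : ℝ) {t : ℝ} (ht : t ≠ 0) :
    HasDerivAt (gfun k)
      ((Complex.I * k * Complex.exp (Complex.I * k * t) * (4 * Real.pi * t)
        - Complex.exp (Complex.I * k * t) * (4 * Real.pi)) / (4 * Real.pi * t) ^ 2) t := by
  have hofReal : HasDerivAt (fun s : ℝ => (s : ℂ)) 1 t := by
    simpa using (hasDerivAt_id t).ofReal_comp
  have hnum : HasDerivAt (fun s : ℝ => Complex.exp (Complex.I * k * s))
      (Complex.exp (Complex.I * k * t) * (Complex.I * k)) t := by
    have : HasDerivAt (fun s : ℝ => Complex.I * (k : ℂ) * (s : ℂ)) (Complex.I * k) t := by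
      simpa using hofReal.const_mul (Complex.I * (k : ℂ))
    exact this.cexp
  have hden : HasDerivAt (fun s : ℝ => ((4 * Real.pi * s : ℝ) : ℂ)) ((4 * Real.pi : ℝ) : ℂ) t := by
    have : HasDerivAt (fun s : ℝ => ((4 * Real.pi : ℝ) : ℂ) * (s : ℂ)) ((4 * Real.pi : ℝ) : ℂ) t := by
      simpa using hofReal.const_mul ((4 * Real.pi : ℝ) : ℂ)
    convert this using 2 with s
    push_cast; ring
  have hd0 : ((4 * Real.pi * t : ℝ) : ℂ) ≠ 0 := by
    have : (4 * Real.pi * t : ℝ) ≠ 0 := by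
      have := Real.pi_pos
      positivity
    exact_mod_cast Complex.ofReal_ne_zero.mpr this
  have := hnum.div hden hd0
  refine HasDerivAt.congr_deriv (f := gfun k) this ?_
  push_cast
  ring

lemma phi_fderiv_apply (k : ℝ) (y x : E3) (h : x ≠ y) :
    fderiv ℝ (fun z => Phi k z y) x (EuclideanSpace.single 2 1)
      = ((x 2 - y 2) / ‖x - y‖ : ℝ) •
        ((Complex.I * k * Complex.exp (Complex.I * k * ‖x - y‖) * (4 * Real.pi * ‖x - y‖)
          - Complex.exp (Complex.I * k * ‖x - y‖) * (4 * Real.pi)) / (4 * Real.pi * ‖x - y‖) ^ 2) := by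
  have hxy : x - y ≠ 0 := sub_ne_zero.mpr h
  have hρ : (0 : ℝ) < ‖x - y‖ := norm_pos_iff.mpr hxy
  have hg := (hasDerivAt_gfun k hρ.ne').hasFDerivAt
  have hρd := hasFDerivAt_norm_sub y x h
  have hcomp := hg.comp x hρd
  have hPhi : HasFDerivAt (fun z => Phi k z y)
      ((ContinuousLinearMap.smulRight (1 : ℝ →L[ℝ] ℝ)
        ((Complex.I * k * Complex.exp (Complex.I * k * ‖x - y‖) * (4 * Real.pi * ‖x - y‖)
          - Complex.exp (Complex.I * k * ‖x - y‖) * (4 * Real.pi)) / (4 * Real.pi * ‖x - y‖) ^ 2)).comp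
        ((2 * ‖x - y‖)⁻¹ • ((fderivInnerCLM ℝ (x - y, x - y)).comp
        ((ContinuousLinearMap.id ℝ E3).prod (ContinuousLinearMap.id ℝ E3))))) x := hcomp
  rw [hPhi.fderiv]
  simp only [ContinuousLinearMap.comp_apply, ContinuousLinearMap.smul_apply,
    ContinuousLinearMap.prod_apply, ContinuousLinearMap.id_apply, fderivInnerCLM_apply,
    ContinuousLinearMap.smulRight_apply, ContinuousLinearMap.one_apply]
  have hinner : (inner ℝ (x - y) (EuclideanSpace.single (2 : Fin 3) (1:ℝ)) : ℝ) = x 2 - y 2 := by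
    rw [EuclideanSpace.inner_single_right]
    simp
  rw [show (inner ℝ (EuclideanSpace.single (2:Fin 3) (1:ℝ)) (x - y) : ℝ) = x 2 - y 2 by
    rw [real_inner_comm]; exact hinner]
  rw [hinner]
  congr 1
  rw [smul_eq_mul]
  field_simp
  ring

lemma norm_ge_aux (k t a : ℝ) (ht : 0 < t) :
    |a| / (4 * Real.pi * t ^ 3) ≤
    ‖((a / t : ℝ)) • ((Complex.I * k * Complex.exp (Complex.I * k * t) * (4 * Real.pi * t)
      - Complex.exp (Complex.I * k * t) * (4 * Real.pi)) / (4 * Real.pi * t) ^ 2)‖ := by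
  have hπ := Real.pi_pos
  have hfac : (Complex.I * k * Complex.exp (Complex.I * k * t) * (4 * Real.pi * t)
      - Complex.exp (Complex.I * k * t) * (4 * Real.pi))
      = ((4 * Real.pi : ℝ) : ℂ) * (Complex.exp (Complex.I * k * t) * (Complex.I * k * t - 1)) := by
    push_cast; ring
  have he : ‖Complex.exp (Complex.I * k * (t:ℂ))‖ = 1 := by
    rw [Complex.norm_exp]
    simp [Complex.mul_re]
  have hA : (1:ℝ) ≤ ‖Complex.I * k * (t:ℂ) - 1‖ := by
    have h1 := Complex.abs_re_le_norm (Complex.I * k * (t:ℂ) - 1)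
    have : (Complex.I * k * (t:ℂ) - 1).re = -1 := by simp [Complex.mul_re]
    rw [this] at h1
    simpa using h1
  have hden : ‖(4 * (Real.pi:ℂ) * (t:ℂ)) ^ 2‖ = (4 * Real.pi * t) ^ 2 := by
    rw [norm_pow]
    have : (4 * (Real.pi:ℂ) * (t:ℂ)) = ((4 * Real.pi * t : ℝ) : ℂ) := by push_cast; ring
    rw [this, Complex.norm_real, Real.norm_eq_abs, abs_of_pos (by positivity)]
  rw [norm_smul, hfac]
  simp only [norm_div, norm_mul, he, hden, Complex.norm_real, Real.norm_eq_abs]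
  rw [abs_of_pos ht, abs_of_pos hπ, abs_of_nonneg (by norm_num : (0:ℝ) ≤ 4)]
  calc |a| / (4 * Real.pi * t ^ 3)
      = |a| / t * (4 * Real.pi * (1 * 1) / (4 * Real.pi * t) ^ 2) := by
        field_simp
    _ ≤ |a| / t * (4 * Real.pi * (1 * ‖Complex.I * k * (t:ℂ) - 1‖) / (4 * Real.pi * t) ^ 2) := by
        gcongr

lemma contOn_aux (k : ℝ) (y : E3) :
    ContinuousOn (fun x : E3 => ‖((x 2 - y 2) / ‖x - y‖ : ℝ) •
      ((Complex.I * k * Complex.exp (Complex.I * k * ‖x - y‖) * (4 * Real.pi * ‖x - y‖)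
        - Complex.exp (Complex.I * k * ‖x - y‖) * (4 * Real.pi)) / (4 * Real.pi * ‖x - y‖) ^ 2)‖ ^ 2)
      {x : E3 | x ≠ y} := by
  have hπ := Real.pi_pos
  have hx2 : Continuous fun x : E3 => x 2 := by fun_prop
  have hρ : Continuous fun x : E3 => ‖x - y‖ :=
    continuous_norm.comp (continuous_id.sub continuous_const)
  have hρne : ∀ x ∈ {x : E3 | x ≠ y}, ‖x - y‖ ≠ 0 := fun x hx =>
    norm_ne_zero_iff.mpr (sub_ne_zero.mpr hx)
  have hρc : Continuous fun x : E3 => ((‖x - y‖ : ℝ) : ℂ) := Complex.continuous_ofReal.comp hρ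
  have hexp : Continuous fun x : E3 => Complex.exp (Complex.I * k * ‖x - y‖) :=
    Complex.continuous_exp.comp (continuous_const.mul hρc)
  have hnum : Continuous fun x : E3 =>
      Complex.I * k * Complex.exp (Complex.I * k * ‖x - y‖) * (4 * Real.pi * ‖x - y‖)
        - Complex.exp (Complex.I * k * ‖x - y‖) * (4 * Real.pi) :=
    ((continuous_const.mul hexp).mul (continuous_const.mul hρc)).sub (hexp.mul continuous_const)
  have hden : Continuous fun x : E3 => (4 * (Real.pi : ℂ) * (‖x - y‖ : ℂ)) ^ 2 :=
    (continuous_const.mul hρc).pow 2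
  have hdenne : ∀ x ∈ {x : E3 | x ≠ y}, (4 * (Real.pi : ℂ) * (‖x - y‖ : ℂ)) ^ 2 ≠ 0 := by
    intro x hx
    have h1 : ((‖x - y‖ : ℝ) : ℂ) ≠ 0 := Complex.ofReal_ne_zero.mpr (hρne x hx)
    have h2 : ((Real.pi : ℝ) : ℂ) ≠ 0 := Complex.ofReal_ne_zero.mpr hπ.ne'
    exact pow_ne_zero 2 (mul_ne_zero (mul_ne_zero (by norm_num) h2) h1)
  have hquot : ContinuousOn (fun x : E3 =>
      (Complex.I * k * Complex.exp (Complex.I * k * ‖x - y‖) * (4 * Real.pi * ‖x - y‖)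
        - Complex.exp (Complex.I * k * ‖x - y‖) * (4 * Real.pi)) / (4 * Real.pi * ‖x - y‖) ^ 2)
      {x : E3 | x ≠ y} := hnum.continuousOn.div hden.continuousOn hdenne
  have hscal : ContinuousOn (fun x : E3 => ((x 2 - y 2) / ‖x - y‖ : ℝ)) {x : E3 | x ≠ y} :=
    ((hx2.sub continuous_const).continuousOn).div hρ.continuousOn hρne
  exact ((hscal.smul hquot).norm).pow 2

lemma abs_coord_le (u : E3) : |u 2| ≤ ‖u‖ := by
  have h1 : (inner ℝ u (EuclideanSpace.single (2 : Fin 3) (1:ℝ)) : ℝ) = u 2 := by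
    rw [EuclideanSpace.inner_single_right]; simp
  have h2 := abs_real_inner_le_norm u (EuclideanSpace.single (2 : Fin 3) (1:ℝ))
  rw [h1, EuclideanSpace.norm_single] at h2
  simpa using h2

/-- Let `k ∈ ℝ`, `δ > 0` and `r > 0`.  Then there exist `C > 0` and an
integer `J ≥ 1`, depending only on `k, δ, r`, such that for all `j ≥ J`:
`∫_{B_r(0) ∩ {x₃ < 0}} |∂_{x₃} Φ_k(x, x_j)|² dx ≥ C·j`.  In particular the `L²`-norms of
the hypersingular incident fields over the interior half-ball grow at least like `√j` as
the sources approach the boundary point. -/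
theorem hypersingular_L2_growth (k δ r : ℝ) (hδ : 0 < δ) (hr : 0 < r) :
    ∃ C > 0, ∃ J : ℕ, 1 ≤ J ∧ ∀ j : ℕ, J ≤ j →
      C * (j : ℝ) ≤
        ∫ x in ball (0 : E3) r ∩ {x : E3 | x 2 < 0},
          ‖fderiv ℝ (fun z => Phi k z (xj δ j)) x (EuclideanSpace.single 2 1)‖ ^ 2 := by
  have hπ := Real.pi_pos
  set K : ℝ := Real.sqrt Real.pi ^ 3 / Real.Gamma ((3 : ℕ) / 2 + 1) with hKdef
  have hKpos : 0 < K := by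
    apply div_pos (by positivity)
    apply Real.Gamma_pos_of_pos
    norm_num
  refine ⟨K / (65536 * Real.pi ^ 2 * δ), by positivity, ⌈δ / r⌉₊ + 1, Nat.le_add_left 1 _, ?_⟩
  intro j hj
  have hj1 : 1 ≤ j := le_trans (Nat.le_add_left 1 _) hj
  have hjpos : (0 : ℝ) < j := by exact_mod_cast hj1
  have hδj : (0 : ℝ) < δ / j := div_pos hδ hjpos
  have hδjr : δ / j < r := by
    rw [div_lt_iff₀ hjpos]
    have h1 : δ / r < (j : ℝ) := by
      calc δ / r ≤ ⌈δ / r⌉₊ := Nat.le_ceil _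
        _ < (⌈δ / r⌉₊ + 1 : ℕ) := by exact_mod_cast Nat.lt_succ_self _
        _ ≤ (j : ℝ) := by exact_mod_cast hj
    calc δ = (δ / r) * r := by field_simp
      _ < j * r := by gcongr
      _ = r * j := mul_comm _ _
  set y : E3 := xj δ j with hy
  have hy2 : y 2 = δ / j := by simp [hy, xj, EuclideanSpace.single_apply]
  have hyn : ‖y‖ = δ / j := by
    rw [hy, xj, EuclideanSpace.norm_single, Real.norm_eq_abs, abs_of_pos hδj]
  -- the region and the small ball
  set R : Set E3 := ball (0 : E3) r ∩ {x : E3 | x 2 < 0} with hR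
  set c : E3 := EuclideanSpace.single (2 : Fin 3) (-(δ / (2 * j))) with hc
  set S : Set E3 := ball c (δ / (4 * j)) with hS
  have hc2 : c 2 = -(δ / (2 * j)) := by simp [hc, EuclideanSpace.single_apply]
  have hcn : ‖c‖ = δ / (2 * j) := by
    rw [hc, EuclideanSpace.norm_single, Real.norm_eq_abs, abs_neg, abs_of_pos (by positivity)]
  -- membership facts about S
  have hSsub : ∀ x ∈ S, ‖x‖ < δ / j ∧ x 2 < -(δ / (4 * j)) := by
    intro x hx
    rw [hS, mem_ball, dist_eq_norm] at hx
    constructor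
    · calc ‖x‖ = ‖x - c + c‖ := by rw [sub_add_cancel]
        _ ≤ ‖x - c‖ + ‖c‖ := norm_add_le _ _
        _ < δ / (4 * j) + δ / (2 * j) := by rw [hcn] at *; gcongr
        _ ≤ δ / j := by rw [div_add_div _ _ (by positivity) (by positivity)]; 
                        rw [div_le_div_iff₀ (by positivity) hjpos]; ring_nf; nlinarith
    · have h1 : |x 2 - c 2| ≤ ‖x - c‖ := by
        have := abs_coord_le (x - c)
        simpa using this
      have h2 : x 2 - c 2 < δ / (4 * j) := lt_of_le_of_lt (le_trans (le_abs_self _) h1) hx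
      rw [hc2] at h2
      have : δ / (4 * j) - δ / (2 * j) ≤ -(δ / (4 * j)) := by
        rw [div_sub_div _ _ (by positivity : (4:ℝ) * j ≠ 0) (by positivity : (2:ℝ) * j ≠ 0)]
        rw [le_neg]
        rw [neg_div', neg_sub]
        rw [div_le_div_iff₀ (by positivity) (by positivity)]
        ring_nf
        nlinarith
      linarith
  have hSR : S ⊆ R := by
    intro x hx
    obtain ⟨h1, h2⟩ := hSsub x hx
    exact ⟨mem_ball_zero_iff.mpr (lt_trans h1 hδjr),
      by simpa using lt_trans h2 (neg_lt_zero.mpr (by positivity))⟩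
  -- the explicit integrand
  have hy2pos : (0:ℝ) < y 2 := by rw [hy2]; exact hδj
  have hRy : ∀ x ∈ R, x ≠ y := by
    intro x hx hxy
    have h2 : x 2 < 0 := hx.2
    rw [hxy] at h2; linarith
  set F : E3 → ℝ := fun x => ‖((x 2 - y 2) / ‖x - y‖ : ℝ) •
      ((Complex.I * k * Complex.exp (Complex.I * k * ‖x - y‖) * (4 * Real.pi * ‖x - y‖)
        - Complex.exp (Complex.I * k * ‖x - y‖) * (4 * Real.pi))
          / (4 * Real.pi * ‖x - y‖) ^ 2)‖ ^ 2 with hF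
  have hmeasR : MeasurableSet R :=
    measurableSet_ball.inter
      (measurableSet_lt (show Continuous fun x : E3 => x 2 by fun_prop).measurable measurable_const)
  have hcong : (∫ x in R, ‖fderiv ℝ (fun z => Phi k z y) x (EuclideanSpace.single 2 1)‖ ^ 2)
      = ∫ x in R, F x := by
    apply setIntegral_congr_fun hmeasR
    intro x hx
    show ‖fderiv ℝ (fun z => Phi k z y) x (EuclideanSpace.single 2 1)‖ ^ 2 = F x
    rw [phi_fderiv_apply k y x (hRy x hx)]
  -- integrability
  have hA : IsCompact (closedBall (0:E3) r ∩ {x : E3 | x 2 ≤ 0}) :=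
    (isCompact_closedBall _ _).inter_right
      (isClosed_le (show Continuous fun x : E3 => x 2 by fun_prop)
        continuous_const)
  have hAy : closedBall (0:E3) r ∩ {x : E3 | x 2 ≤ 0} ⊆ {x : E3 | x ≠ y} := by
    intro x hx hxy
    have h2 : x 2 ≤ 0 := hx.2
    rw [hxy] at h2; linarith
  have hFint : IntegrableOn F R := by
    have h1 : IntegrableOn F (closedBall (0:E3) r ∩ {x : E3 | x 2 ≤ 0}) :=
      ((contOn_aux k y).mono hAy).integrableOn_compact hA
    exact h1.mono_set (fun x hx =>
      ⟨ball_subset_closedBall hx.1, le_of_lt (show x 2 < 0 from hx.2)⟩)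
  have hmono : (∫ x in S, F x) ≤ ∫ x in R, F x :=
    setIntegral_mono_set hFint (Filter.Eventually.of_forall fun x => by positivity)
      (HasSubset.Subset.eventuallyLE hSR)
  -- pointwise lower bound on S
  have hlow : ∀ x ∈ S, ((δ / j) / (4 * Real.pi * (2 * (δ / j)) ^ 3)) ^ 2 ≤ F x := by
    intro x hx
    obtain ⟨h1, h2⟩ := hSsub x hx
    have hx2 : x 2 < 0 := lt_trans h2 (neg_lt_zero.mpr (by positivity))
    have hxny : x ≠ y := by
      intro hxy; rw [hxy] at hx2; linarith
    have hρpos : (0:ℝ) < ‖x - y‖ := norm_pos_iff.mpr (sub_ne_zero.mpr hxny)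
    have hρle : ‖x - y‖ ≤ 2 * (δ / j) := by
      calc ‖x - y‖ ≤ ‖x‖ + ‖y‖ := norm_sub_le _ _
        _ ≤ δ / j + δ / j := by rw [hyn]; exact add_le_add h1.le le_rfl
        _ = 2 * (δ / j) := by ring
    have ha : δ / j ≤ |x 2 - y 2| := by
      rw [abs_of_nonpos (by rw [hy2]; linarith), hy2]
      linarith
    have step1 := norm_ge_aux k ‖x - y‖ (x 2 - y 2) hρpos
    have step2 : (δ / j) / (4 * Real.pi * (2 * (δ / j)) ^ 3)
        ≤ |x 2 - y 2| / (4 * Real.pi * ‖x - y‖ ^ 3) := by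
      gcongr
    have step3 : (δ / j) / (4 * Real.pi * (2 * (δ / j)) ^ 3)
        ≤ ‖((x 2 - y 2) / ‖x - y‖ : ℝ) •
        ((Complex.I * k * Complex.exp (Complex.I * k * ‖x - y‖) * (4 * Real.pi * ‖x - y‖)
        - Complex.exp (Complex.I * k * ‖x - y‖) * (4 * Real.pi))
          / (4 * Real.pi * ‖x - y‖) ^ 2)‖ := le_trans step2 step1
    calc ((δ / j) / (4 * Real.pi * (2 * (δ / j)) ^ 3)) ^ 2
        ≤ ‖((x 2 - y 2) / ‖x - y‖ : ℝ) •
        ((Complex.I * k * Complex.exp (Complex.I * k * ‖x - y‖) * (4 * Real.pi * ‖x - y‖)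
        - Complex.exp (Complex.I * k * ‖x - y‖) * (4 * Real.pi))
          / (4 * Real.pi * ‖x - y‖) ^ 2)‖ ^ 2 := by
          apply pow_le_pow_left₀ (by positivity) step3
      _ = F x := rfl
  -- the volume of S
  have hSmeas : MeasurableSet S := measurableSet_ball
  have hSvol : volume S ≠ ⊤ := measure_ball_lt_top.ne
  have hintS : IntegrableOn F S := hFint.mono_set hSR
  have hlb := setIntegral_ge_of_const_le hSmeas hSvol hlow hintS
  have hvol : (volume S).toReal = (δ / (4 * j)) ^ 3 * K := by
    rw [hS, EuclideanSpace.volume_ball]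
    simp only [Fintype.card_fin]
    rw [← ENNReal.ofReal_pow (by positivity), ← ENNReal.ofReal_mul (by positivity),
      ENNReal.toReal_ofReal (by positivity)]
  rw [measureReal_def, hvol, smul_eq_mul, mul_comm ((δ / (4 * j)) ^ 3 * K)] at hlb
  calc K / (65536 * Real.pi ^ 2 * δ) * j
      = ((δ / j) / (4 * Real.pi * (2 * (δ / j)) ^ 3)) ^ 2 * ((δ / (4 * j)) ^ 3 * K) := by
        field_simp
        ring
    _ ≤ ∫ x in S, F x := hlb
    _ ≤ ∫ x in R, F x := hmono
    _ = _ := hcong.symm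
end
end
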